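/- Let Γ ⊂ ℝ be countable and dense. Define ℝ_Γ to be the set obtained from ℝ by replacing each point a ∈ Γ with two points a₋ < a₊, linearly ordered by the induced order, with the order topology. Then the sets [a₊, b₋] = (a₋, b₊) for a, b ∈ Γ with a < b form a countable basis of compact open sets for ℝ_Γ, and each such set is homeomorphic to the Cantor set. -/

import Mathlib

/-- The doubled-points space `ℝ_Γ`: points of `ℝ \ Γ` together with two points
`a₋ = (a, false)` and `a₊ = (a, true)` for each `a ∈ Γ`, linearly ordered lexicographically. -/
def RGamma (Γ : Set ℝ) : Type :=
  {p : ℝ ×ₗ Bool // (ofLex p).1 ∈ Γ ∨ (ofLex p).2 = false}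

noncomputable instance (Γ : Set ℝ) : LinearOrder (RGamma Γ) :=
  inferInstanceAs (LinearOrder {p : ℝ ×ₗ Bool // (ofLex p).1 ∈ Γ ∨ (ofLex p).2 = false})

/-- `ℝ_Γ` carries the order topology. -/
noncomputable instance (Γ : Set ℝ) : TopologicalSpace (RGamma Γ) := Preorder.topology _

instance (Γ : Set ℝ) : OrderTopology (RGamma Γ) := ⟨rfl⟩

/-- The point `a₊` for `a ∈ Γ`. -/
def RGamma.plus (Γ : Set ℝ) (a : ℝ) (ha : a ∈ Γ) : RGamma Γ :=
  ⟨toLex (a, true), Or.inl ha⟩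

/-- The point `a₋` for `a ∈ Γ`. -/
def RGamma.minus (Γ : Set ℝ) (a : ℝ) (_ha : a ∈ Γ) : RGamma Γ :=
  ⟨toLex (a, false), Or.inr rfl⟩

/-- The canonical quotient map `q : ℝ_Γ → ℝ`, `t ↦ t`, `a₊, a₋ ↦ a`. -/
def RGamma.q (Γ : Set ℝ) (x : RGamma Γ) : ℝ := (ofLex x.1).1

open TopologicalSpace


namespace RGammaAux

theorem le_iff' {Γ : Set ℝ} (w z : RGamma Γ) :
    w ≤ z ↔ (ofLex w.1).1 < (ofLex z.1).1 ∨
      ((ofLex w.1).1 = (ofLex z.1).1 ∧ (ofLex w.1).2 ≤ (ofLex z.1).2) :=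
  (Prod.Lex.le_iff : w.1 ≤ z.1 ↔ _)

theorem lt_iff' {Γ : Set ℝ} (w z : RGamma Γ) :
    w < z ↔ (ofLex w.1).1 < (ofLex z.1).1 ∨
      ((ofLex w.1).1 = (ofLex z.1).1 ∧ (ofLex w.1).2 < (ofLex z.1).2) :=
  (Prod.Lex.lt_iff : w.1 < z.1 ↔ _)


open Classical in
noncomputable def mid (e : ℕ → ℝ) (u v : ℝ) : ℝ :=
  if h : ∃ n, e n ∈ Set.Ioo u v then e (Nat.find h) else 0

noncomputable def ivl (e : ℕ → ℝ) (a b : ℝ) (x : ℕ → Bool) : ℕ → ℝ × ℝ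
  | 0 => (a, b)
  | n + 1 =>
      let p := ivl e a b x n
      if x n then (mid e p.1 p.2, p.2) else (p.1, mid e p.1 p.2)

variable {e : ℕ → ℝ} {a b : ℝ} {x y : ℕ → Bool}

theorem mid_mem (He : ∀ u v : ℝ, u < v → ∃ n, e n ∈ Set.Ioo u v) {u v : ℝ} (h : u < v) :
    mid e u v ∈ Set.Ioo u v := by
  classical
  rw [mid, dif_pos (He u v h)]
  exact Nat.find_spec (He u v h)

theorem mid_mem_range (He : ∀ u v : ℝ, u < v → ∃ n, e n ∈ Set.Ioo u v) {u v : ℝ} (h : u < v) :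
    mid e u v ∈ Set.range e := by
  classical
  rw [mid, dif_pos (He u v h)]
  exact ⟨_, rfl⟩

theorem mid_index {u v : ℝ} {k : ℕ} (hk : e k ∈ Set.Ioo u v) :
    ∃ j ≤ k, mid e u v = e j := by
  classical
  rw [mid, dif_pos ⟨k, hk⟩]
  exact ⟨_, Nat.find_min' _ hk, rfl⟩

theorem ivl_lt (He : ∀ u v : ℝ, u < v → ∃ n, e n ∈ Set.Ioo u v) (hab : a < b) :
    ∀ n, (ivl e a b x n).1 < (ivl e a b x n).2 := by
  intro n
  induction n with
  | zero => exact hab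
  | succ n ih =>
      have h := mid_mem He ih
      rw [ivl]
      cases hx : x n <;> simp only [hx, if_true, if_false, Bool.false_eq_true]
      · exact h.1
      · exact h.2

theorem ivl_left_mono (He : ∀ u v : ℝ, u < v → ∃ n, e n ∈ Set.Ioo u v) (hab : a < b) :
    Monotone fun n => (ivl e a b x n).1 := by
  apply monotone_nat_of_le_succ
  intro n
  have h := mid_mem He (ivl_lt He hab (x := x) n)
  rw [ivl]
  cases hx : x n <;> simp only [hx, if_true, if_false, Bool.false_eq_true]
  · exact le_rfl
  · exact h.1.le

theorem ivl_right_anti (He : ∀ u v : ℝ, u < v → ∃ n, e n ∈ Set.Ioo u v) (hab : a < b) :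
    Antitone fun n => (ivl e a b x n).2 := by
  apply antitone_nat_of_succ_le
  intro n
  have h := mid_mem He (ivl_lt He hab (x := x) n)
  rw [ivl]
  cases hx : x n <;> simp only [hx, if_true, if_false, Bool.false_eq_true]
  · exact h.2.le
  · exact le_rfl

theorem ivl_cross (He : ∀ u v : ℝ, u < v → ∃ n, e n ∈ Set.Ioo u v) (hab : a < b)
    (m n : ℕ) : (ivl e a b x m).1 < (ivl e a b x n).2 := by
  rcases le_total m n with h | h
  · exact lt_of_le_of_lt (ivl_left_mono He hab h) (ivl_lt He hab n)
  · exact lt_of_lt_of_le (ivl_lt He hab m) (ivl_right_anti He hab h)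

theorem ivl_mem {S : Set ℝ} (He : ∀ u v : ℝ, u < v → ∃ n, e n ∈ Set.Ioo u v) (hab : a < b)
    (ha : a ∈ S) (hb : b ∈ S) (hre : Set.range e ⊆ S) :
    ∀ n, (ivl e a b x n).1 ∈ S ∧ (ivl e a b x n).2 ∈ S := by
  intro n
  induction n with
  | zero => exact ⟨ha, hb⟩
  | succ n ih =>
      have h := hre (mid_mem_range He (ivl_lt He hab (x := x) n))
      rw [ivl]
      cases hx : x n <;> simp only [hx, if_true, if_false, Bool.false_eq_true] <;>
        exact ⟨by tauto, by tauto⟩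

theorem ivl_congr {n : ℕ} (h : ∀ i < n, x i = y i) : ivl e a b x n = ivl e a b y n := by
  induction n with
  | zero => rfl
  | succ n ih =>
      rw [ivl, ivl, ih fun i hi => h i (Nat.lt_succ_of_lt hi), h n (Nat.lt_succ_self n)]

theorem mid_endpoint (n : ℕ) :
    mid e (ivl e a b x n).1 (ivl e a b x n).2 = (ivl e a b x (n+1)).1 ∨
    mid e (ivl e a b x n).1 (ivl e a b x n).2 = (ivl e a b x (n+1)).2 := by
  rw [ivl]
  cases hx : x n <;> simp [hx]


variable {e : ℕ → ℝ} {a b : ℝ} {x y : ℕ → Bool}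

/-- Key pigeonhole lemma: no `e k` lies strictly inside every interval of the scheme. -/
theorem keyA (He : ∀ u v : ℝ, u < v → ∃ n, e n ∈ Set.Ioo u v) (hab : a < b) (k : ℕ)
    (H : ∀ n, e k ∈ Set.Ioo (ivl e a b x n).1 (ivl e a b x n).2) : False := by
  classical
  -- the chosen midpoint index at stage n
  have hex : ∀ n : ℕ, ∃ j ≤ k, mid e (ivl e a b x n).1 (ivl e a b x n).2 = e j :=
    fun n => mid_index (H n)
  set f : ℕ → ℕ := fun n => (hex n).choose with hf
  have hfk : ∀ n, f n ≤ k := fun n => (hex n).choose_spec.1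
  have hfe : ∀ n, mid e (ivl e a b x n).1 (ivl e a b x n).2 = e (f n) :=
    fun n => (hex n).choose_spec.2
  -- midpoints at distinct stages are distinct reals
  have hmidmem : ∀ n, mid e (ivl e a b x n).1 (ivl e a b x n).2 ∈
      Set.Ioo (ivl e a b x n).1 (ivl e a b x n).2 := fun n => mid_mem He (ivl_lt He hab n)
  have hstrict : ∀ {n n' : ℕ}, n < n' →
      (ivl e a b x (n+1)).1 < mid e (ivl e a b x n').1 (ivl e a b x n').2 ∧
      mid e (ivl e a b x n').1 (ivl e a b x n').2 < (ivl e a b x (n+1)).2 := by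
    intro n n' hnn'
    have h1 : (ivl e a b x (n+1)).1 ≤ (ivl e a b x n').1 := ivl_left_mono He hab hnn'
    have h2 : (ivl e a b x n').2 ≤ (ivl e a b x (n+1)).2 := ivl_right_anti He hab hnn'
    exact ⟨lt_of_le_of_lt h1 (hmidmem n').1, lt_of_lt_of_le (hmidmem n').2 h2⟩
  have hdist : ∀ {n n' : ℕ}, n < n' →
      mid e (ivl e a b x n).1 (ivl e a b x n).2 ≠
      mid e (ivl e a b x n').1 (ivl e a b x n').2 := by
    intro n n' hnn' hcontra
    rcases mid_endpoint (e := e) (a := a) (b := b) (x := x) n with h | h <;>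
      rw [hcontra] at h
    · exact absurd h.symm (ne_of_lt (hstrict hnn').1)
    · exact absurd h (ne_of_lt (hstrict hnn').2)
  -- f n ≠ k
  have hfnk : ∀ n, f n ≠ k := by
    intro n hc
    have h1 := hfe n
    rw [hc] at h1
    rcases mid_endpoint (e := e) (a := a) (b := b) (x := x) n with h | h <;> rw [h1] at h
    · exact absurd h.symm (ne_of_lt (H (n+1)).1)
    · exact absurd h (ne_of_lt (H (n+1)).2)
  -- f is injective
  have hinj : ∀ {n n' : ℕ}, n ≠ n' → f n ≠ f n' := by
    intro n n' hne hc
    rcases hne.lt_or_gt with h | h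
    · exact hdist h (by rw [hfe, hfe, hc])
    · exact hdist h (by rw [hfe, hfe, hc])
  -- pigeonhole
  have hcard := Finset.card_le_card_of_injOn f
    (fun n _ => Finset.mem_range.2 (lt_of_le_of_ne (hfk n) (hfnk n)))
    (fun n _ n' _ h => by by_contra hne; exact hinj hne h)
    (s := Finset.range (k+1)) (t := Finset.range k)
  simp only [Finset.card_range] at hcard
  omega

/-- The limit real of the scheme along `x`. -/
noncomputable def lim (e : ℕ → ℝ) (a b : ℝ) (x : ℕ → Bool) : ℝ :=
  ⨆ n, (ivl e a b x n).1

theorem le_lim (He : ∀ u v : ℝ, u < v → ∃ n, e n ∈ Set.Ioo u v) (hab : a < b) (n : ℕ) :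
    (ivl e a b x n).1 ≤ lim e a b x :=
  le_ciSup ⟨(ivl e a b x 0).2, by rintro _ ⟨m, rfl⟩; exact (ivl_cross He hab m 0).le⟩ n

theorem lim_le (He : ∀ u v : ℝ, u < v → ∃ n, e n ∈ Set.Ioo u v) (hab : a < b) (n : ℕ) :
    lim e a b x ≤ (ivl e a b x n).2 :=
  ciSup_le fun m => (ivl_cross He hab m n).le

theorem lim_eq_iInf (He : ∀ u v : ℝ, u < v → ∃ n, e n ∈ Set.Ioo u v) (hab : a < b) :
    lim e a b x = ⨅ n, (ivl e a b x n).2 := by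
  refine le_antisymm (le_ciInf (lim_le He hab)) ?_
  by_contra hcon
  push_neg at hcon
  obtain ⟨k, hk⟩ := He _ _ hcon
  refine keyA He hab (x := x) k fun n => ?_
  have h1 : (ivl e a b x n).1 ≤ lim e a b x := le_lim He hab n
  have h2 : (⨅ n, (ivl e a b x n).2) ≤ (ivl e a b x n).2 :=
    ciInf_le ⟨(ivl e a b x 0).1, by rintro _ ⟨m, rfl⟩; exact (ivl_cross He hab 0 m).le⟩ n
  exact ⟨lt_of_le_of_lt h1 hk.1, lt_of_lt_of_le hk.2 h2⟩

theorem lim_notmem (He : ∀ u v : ℝ, u < v → ∃ n, e n ∈ Set.Ioo u v) (hab : a < b)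
    (h1 : ∀ n, (ivl e a b x n).1 ≠ lim e a b x)
    (h2 : ∀ n, (ivl e a b x n).2 ≠ lim e a b x) :
    lim e a b x ∉ Set.range e := by
  rintro ⟨k, hk⟩
  refine keyA He hab (x := x) k fun n => ?_
  rw [hk]
  exact ⟨lt_of_le_of_ne (le_lim He hab n) (h1 n), lt_of_le_of_ne' (lim_le He hab n) (h2 n)⟩

/-- Not both endpoints can stabilize at the limit. -/
theorem not_both (He : ∀ u v : ℝ, u < v → ∃ n, e n ∈ Set.Ioo u v) (hab : a < b)
    {m n : ℕ} (h1 : (ivl e a b x m).1 = lim e a b x)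
    (h2 : (ivl e a b x n).2 = lim e a b x) : False := by
  set N := max m n
  have hl : (ivl e a b x N).1 = lim e a b x :=
    le_antisymm (le_lim He hab N) (h1 ▸ ivl_left_mono He hab (le_max_left m n))
  have hr : (ivl e a b x N).2 = lim e a b x :=
    le_antisymm (h2 ▸ ivl_right_anti He hab (le_max_right m n))
      (lim_le He hab N)
  exact absurd (hl.trans hr.symm) (ne_of_lt (ivl_lt He hab N))


variable {Γ : Set ℝ}

open Classical in
/-- The point of `ℝ_Γ` determined by the scheme along `x`. -/
noncomputable def pt (Γ : Set ℝ) (e : ℕ → ℝ) (a b : ℝ) (x : ℕ → Bool)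
    (hΓ : ∀ n, (ivl e a b x n).1 ∈ Γ) : RGamma Γ :=
  (if h1 : ∃ n, (ivl e a b x n).1 = lim e a b x then
    ⟨toLex (lim e a b x, true), Or.inl (h1.choose_spec ▸ hΓ h1.choose)⟩
  else ⟨toLex (lim e a b x, false), Or.inr rfl⟩ :
    {p : ℝ ×ₗ Bool // (ofLex p).1 ∈ Γ ∨ (ofLex p).2 = false})

theorem pt_q (hΓ : ∀ n, (ivl e a b x n).1 ∈ Γ) :
    (ofLex (pt Γ e a b x hΓ).1).1 = lim e a b x := by
  unfold pt; split_ifs <;> rfl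

theorem plus_le_pt (He : ∀ u v : ℝ, u < v → ∃ n, e n ∈ Set.Ioo u v) (hab : a < b)
    (hΓ : ∀ n, (ivl e a b x n).1 ∈ Γ) (n : ℕ) :
    RGamma.plus Γ (ivl e a b x n).1 (hΓ n) ≤ pt Γ e a b x hΓ := by
  unfold pt
  split_ifs with h1
  · refine (le_iff' _ _).2 ?_
    simp only [RGamma.plus, ofLex_toLex]
    rcases (le_lim He hab n).eq_or_lt with h | h
    · exact Or.inr ⟨h, le_rfl⟩
    · exact Or.inl h
  · push_neg at h1
    exact (le_iff' _ _).2 (Or.inl (lt_of_le_of_ne (le_lim He hab n) (h1 n)))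

theorem pt_le_minus (He : ∀ u v : ℝ, u < v → ∃ n, e n ∈ Set.Ioo u v) (hab : a < b)
    (hΓ : ∀ n, (ivl e a b x n).1 ∈ Γ) (hΓ2 : ∀ n, (ivl e a b x n).2 ∈ Γ) (n : ℕ) :
    pt Γ e a b x hΓ ≤ RGamma.minus Γ (ivl e a b x n).2 (hΓ2 n) := by
  unfold pt
  split_ifs with h1
  · obtain ⟨m, hm⟩ := h1
    refine (le_iff' _ _).2 (Or.inl ?_)
    exact lt_of_le_of_ne (lim_le He hab n) fun hc => not_both He hab hm hc.symm
  · refine (le_iff' _ _).2 ?_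
    simp only [RGamma.minus, ofLex_toLex]
    rcases (lim_le He hab n).eq_or_lt with h | h
    · exact Or.inr ⟨h, le_rfl⟩
    · exact Or.inl h

theorem pt_unique (He : ∀ u v : ℝ, u < v → ∃ n, e n ∈ Set.Ioo u v) (hab : a < b)
    (heΓ : Γ = Set.range e)
    (hΓ : ∀ n, (ivl e a b x n).1 ∈ Γ) (hΓ2 : ∀ n, (ivl e a b x n).2 ∈ Γ)
    (w : RGamma Γ)
    (h : ∀ n, RGamma.plus Γ (ivl e a b x n).1 (hΓ n) ≤ w ∧
      w ≤ RGamma.minus Γ (ivl e a b x n).2 (hΓ2 n)) :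
    w = pt Γ e a b x hΓ := by
  have hc1 : ∀ n, (ivl e a b x n).1 ≤ (ofLex w.1).1 := by
    intro n
    rcases (le_iff' _ _).1 (h n).1 with h' | h'
    · exact h'.le
    · exact h'.1.le
  have hc2 : ∀ n, (ofLex w.1).1 ≤ (ivl e a b x n).2 := by
    intro n
    rcases (le_iff' _ _).1 (h n).2 with h' | h'
    · exact h'.le
    · exact h'.1.le
  have hceq : (ofLex w.1).1 = lim e a b x := by
    refine le_antisymm ?_ ?_
    · rw [lim_eq_iInf He hab]; exact le_ciInf hc2
    · exact ciSup_le hc1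
  unfold pt
  split_ifs with h1
  · obtain ⟨n, hn⟩ := h1
    have hd : (ofLex w.1).2 = true := by
      rcases (le_iff' _ _).1 (h n).1 with h' | h'
      · exact absurd h' (by simp [RGamma.plus, hn, hceq])
      · simp only [RGamma.plus, ofLex_toLex] at h'
        exact le_antisymm (Bool.le_true _) h'.2
    apply Subtype.ext
    show w.1 = toLex (lim e a b x, true)
    rw [show w.1 = toLex ((ofLex w.1).1, (ofLex w.1).2) from rfl, hd, hceq]
  · have hd : (ofLex w.1).2 = false := by
      by_cases h2 : ∃ n, (ivl e a b x n).2 = lim e a b x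
      · obtain ⟨n, hn⟩ := h2
        rcases (le_iff' _ _).1 (h n).2 with h' | h'
        · exact absurd h' (by simp [RGamma.minus, hn, hceq])
        · simp only [RGamma.minus, ofLex_toLex] at h'
          exact le_antisymm h'.2 (Bool.false_le _)
      · push_neg at h1 h2
        have : lim e a b x ∉ Γ := heΓ ▸ lim_notmem He hab h1 h2
        rcases w.2 with hw | hw
        · exact absurd (hceq ▸ hw) this
        · exact hw
    apply Subtype.ext
    show w.1 = toLex (lim e a b x, false)
    rw [show w.1 = toLex ((ofLex w.1).1, (ofLex w.1).2) from rfl, hd, hceq]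

theorem pt_lt (He : ∀ u v : ℝ, u < v → ∃ n, e n ∈ Set.Ioo u v) (hab : a < b)
    (hΓx : ∀ n, (ivl e a b x n).1 ∈ Γ) (hΓx2 : ∀ n, (ivl e a b x n).2 ∈ Γ)
    (hΓy : ∀ n, (ivl e a b y n).1 ∈ Γ)
    {n : ℕ} (hpre : ∀ i < n, x i = y i) (hxn : x n = false) (hyn : y n = true) :
    pt Γ e a b x hΓx < pt Γ e a b y hΓy := by
  have hcongr : ivl e a b x n = ivl e a b y n := ivl_congr hpre
  have hx1 : (ivl e a b x (n+1)).2 = mid e (ivl e a b x n).1 (ivl e a b x n).2 := by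
    rw [ivl]; simp [hxn]
  have hy1 : (ivl e a b y (n+1)).1 = mid e (ivl e a b y n).1 (ivl e a b y n).2 := by
    rw [ivl]; simp [hyn]
  have hmid : (ivl e a b x (n+1)).2 = (ivl e a b y (n+1)).1 := by
    rw [hx1, hy1, hcongr]
  calc pt Γ e a b x hΓx ≤ RGamma.minus Γ (ivl e a b x (n+1)).2 (hΓx2 (n+1)) :=
        pt_le_minus He hab hΓx hΓx2 (n+1)
    _ < RGamma.plus Γ (ivl e a b y (n+1)).1 (hΓy (n+1)) := by
        refine (lt_iff' _ _).2 (Or.inr ?_)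
        simp only [RGamma.minus, RGamma.plus, ofLex_toLex]
        exact ⟨hmid, by decide⟩
    _ ≤ pt Γ e a b y hΓy := plus_le_pt He hab hΓy (n+1)

theorem exists_plus_gt (He : ∀ u v : ℝ, u < v → ∃ n, e n ∈ Set.Ioo u v) (hab : a < b)
    (hΓ : ∀ n, (ivl e a b x n).1 ∈ Γ) {w : RGamma Γ} (hw : w < pt Γ e a b x hΓ) :
    ∃ n, w < RGamma.plus Γ (ivl e a b x n).1 (hΓ n) := by
  unfold pt at hw
  split_ifs at hw with h1
  · rcases (lt_iff' _ _).1 hw with h' | h'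
    · simp only [ofLex_toLex] at h'
      have : (ofLex w.1).1 < ⨆ n, (ivl e a b x n).1 := h'
      obtain ⟨n, hn⟩ := exists_lt_of_lt_ciSup this
      exact ⟨n, (lt_iff' _ _).2 (Or.inl hn)⟩
    · simp only [ofLex_toLex] at h'
      obtain ⟨n, hn⟩ := h1
      refine ⟨n, (lt_iff' _ _).2 (Or.inr ?_)⟩
      simp only [RGamma.plus, ofLex_toLex]
      exact ⟨by rw [h'.1, hn], h'.2⟩
  · rcases (lt_iff' _ _).1 hw with h' | h'
    · simp only [ofLex_toLex] at h'
      have : (ofLex w.1).1 < ⨆ n, (ivl e a b x n).1 := h'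
      obtain ⟨n, hn⟩ := exists_lt_of_lt_ciSup this
      exact ⟨n, (lt_iff' _ _).2 (Or.inl hn)⟩
    · simp only [ofLex_toLex] at h'
      exact absurd h'.2 (not_lt.2 (Bool.false_le _))

theorem exists_minus_lt (He : ∀ u v : ℝ, u < v → ∃ n, e n ∈ Set.Ioo u v) (hab : a < b)
    (heΓ : Γ = Set.range e)
    (hΓ : ∀ n, (ivl e a b x n).1 ∈ Γ) (hΓ2 : ∀ n, (ivl e a b x n).2 ∈ Γ)
    {w : RGamma Γ} (hw : pt Γ e a b x hΓ < w) :
    ∃ n, RGamma.minus Γ (ivl e a b x n).2 (hΓ2 n) < w := by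
  have hlim : lim e a b x < (ofLex w.1).1 ∨
      (lim e a b x = (ofLex w.1).1 ∧ (ofLex (pt Γ e a b x hΓ).1).2 < (ofLex w.1).2) := by
    have := (lt_iff' _ _).1 hw
    rwa [pt_q] at this
  rcases hlim with h' | h'
  · have : (⨅ n, (ivl e a b x n).2) < (ofLex w.1).1 := by
      rw [← lim_eq_iInf He hab]; exact h'
    obtain ⟨n, hn⟩ := exists_lt_of_ciInf_lt this
    exact ⟨n, (lt_iff' _ _).2 (Or.inl hn)⟩
  · -- pt has second coordinate `false` in this case is impossible unless it is `true`?
    -- here pt snd < w snd means pt snd = false, so ¬∃ n, l n = lim; then h2 side: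
    unfold pt at h'
    split_ifs at h' with h1
    · simp only [ofLex_toLex] at h'
      exact absurd h'.2 (not_lt.2 (Bool.le_true _))
    · simp only [ofLex_toLex] at h'
      have hwt : (ofLex w.1).2 = true := by
        rcases Bool.eq_false_or_eq_true (ofLex w.1).2 with h | h
        · exact h
        · rw [h] at h'; exact absurd h'.2 (lt_irrefl false)
      have hwΓ : (ofLex w.1).1 ∈ Γ := by
        rcases w.2 with h | h
        · exact h
        · rw [hwt] at h; simp at h
      rw [← h'.1] at hwΓ
      by_cases h2 : ∃ n, (ivl e a b x n).2 = lim e a b x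
      · obtain ⟨n, hn⟩ := h2
        refine ⟨n, (lt_iff' _ _).2 (Or.inr ?_)⟩
        simp only [RGamma.minus, ofLex_toLex]
        exact ⟨by rw [hn, h'.1], by rw [hwt]; decide⟩
      · push_neg at h1 h2
        exact absurd (heΓ ▸ hwΓ) (lim_notmem He hab h1 h2)

open Classical in
/-- The nested intervals tracking a point `w`. -/
noncomputable def path (e : ℕ → ℝ) (a b : ℝ) (w : ℝ ×ₗ Bool) : ℕ → ℝ × ℝ
  | 0 => (a, b)
  | n + 1 =>
      let p := path e a b w n
      let m := mid e p.1 p.2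
      if w ≤ toLex (m, false) then (p.1, m) else (m, p.2)

open Classical in
/-- The bit sequence tracking a point `w`. -/
noncomputable def bits (e : ℕ → ℝ) (a b : ℝ) (w : ℝ ×ₗ Bool) : ℕ → Bool := fun n =>
  let p := path e a b w n
  ! decide (w ≤ toLex (mid e p.1 p.2, false))

theorem bits_path (w : ℝ ×ₗ Bool) (n : ℕ) :
    ivl e a b (bits e a b w) n = path e a b w n := by
  classical
  induction n with
  | zero => rfl
  | succ n ih =>
      rw [ivl, path, ih]
      by_cases h : w ≤ toLex (mid e (path e a b w n).1 (path e a b w n).2, false) <;>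
        simp [bits, h, ih]

theorem lex_false_lt {m : ℝ} {w : ℝ ×ₗ Bool} (h : toLex (m, false) < w) :
    toLex (m, true) ≤ w := by
  rcases Prod.Lex.lt_iff.1 h with h' | h'
  · exact Prod.Lex.le_iff.2 (Or.inl h')
  · refine Prod.Lex.le_iff.2 (Or.inr ⟨h'.1, ?_⟩)
    show true ≤ (ofLex w).2
    rcases Bool.eq_false_or_eq_true (ofLex w).2 with hh | hh
    · rw [hh]
    · have h2 : false < (ofLex w).2 := h'.2
      rw [hh] at h2
      exact absurd h2 (lt_irrefl false)

theorem path_mem (He : ∀ u v : ℝ, u < v → ∃ n, e n ∈ Set.Ioo u v) (hab : a < b)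
    {w : ℝ ×ₗ Bool} (hw1 : toLex (a, true) ≤ w) (hw2 : w ≤ toLex (b, false)) (n : ℕ) :
    toLex ((path e a b w n).1, true) ≤ w ∧ w ≤ toLex ((path e a b w n).2, false) := by
  classical
  induction n with
  | zero => exact ⟨hw1, hw2⟩
  | succ n ih =>
      have hlt : (path e a b w n).1 < (path e a b w n).2 := by
        rw [← bits_path]; exact ivl_lt He hab n
      have hm := mid_mem He hlt
      rw [path]
      by_cases h : w ≤ toLex (mid e (path e a b w n).1 (path e a b w n).2, false)
      · rw [if_pos h]
        exact ⟨ih.1, h⟩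
      · rw [if_neg h]
        exact ⟨lex_false_lt (not_le.1 h), ih.2⟩

theorem plus_congr {c c' : ℝ} (h : c = c') (hc : c ∈ Γ) (hc' : c' ∈ Γ) :
    RGamma.plus Γ c hc = RGamma.plus Γ c' hc' := by subst h; rfl

theorem minus_congr {c c' : ℝ} (h : c = c') (hc : c ∈ Γ) (hc' : c' ∈ Γ) :
    RGamma.minus Γ c hc = RGamma.minus Γ c' hc' := by subst h; rfl

theorem minus_lt_plus {c : ℝ} (h1 : c ∈ Γ) (h2 : c ∈ Γ) :
    RGamma.minus Γ c h1 < RGamma.plus Γ c h2 :=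
  (lt_iff' _ _).2 (Or.inr ⟨rfl, show (false : Bool) < true by decide⟩)

theorem plus_le_of_minus_lt {c : ℝ} {h1 : c ∈ Γ} {z : RGamma Γ}
    (h : RGamma.minus Γ c h1 < z) : RGamma.plus Γ c h1 ≤ z :=
  lex_false_lt h

theorem lex_lt_true {m : ℝ} {w : ℝ ×ₗ Bool} (h : w < toLex (m, true)) :
    w ≤ toLex (m, false) := by
  rcases Prod.Lex.lt_iff.1 h with h' | h'
  · exact Prod.Lex.le_iff.2 (Or.inl h')
  · refine Prod.Lex.le_iff.2 (Or.inr ⟨h'.1, ?_⟩)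
    show (ofLex w).2 ≤ false
    rcases Bool.eq_false_or_eq_true (ofLex w).2 with hh | hh
    · have h2 : (ofLex w).2 < true := h'.2
      rw [hh] at h2
      exact absurd h2 (lt_irrefl true)
    · rw [hh]

theorem le_minus_of_lt_plus {c : ℝ} {h1 : c ∈ Γ} {z : RGamma Γ}
    (h : z < RGamma.plus Γ c h1) : z ≤ RGamma.minus Γ c h1 :=
  lex_lt_true h

end RGammaAux

/-- for `Γ ⊂ ℝ` countable and dense, the sets `[a₊, b₋]` (`a, b ∈ Γ`, `a < b`)
form a countable basis of compact open sets for the order topology on `ℝ_Γ`, and each such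
set is a Cantor set (homeomorphic to the Cantor space `ℕ → Bool`). -/
theorem RGamma_basis_cantor (Γ : Set ℝ) (hc : Γ.Countable) (hd : Dense Γ) :
    IsTopologicalBasis {S : Set (RGamma Γ) | ∃ a, ∃ ha : a ∈ Γ, ∃ b, ∃ hb : b ∈ Γ,
        a < b ∧ S = Set.Icc (RGamma.plus Γ a ha) (RGamma.minus Γ b hb)} ∧
    Set.Countable {S : Set (RGamma Γ) | ∃ a, ∃ ha : a ∈ Γ, ∃ b, ∃ hb : b ∈ Γ,
        a < b ∧ S = Set.Icc (RGamma.plus Γ a ha) (RGamma.minus Γ b hb)} ∧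
    ∀ a, ∀ ha : a ∈ Γ, ∀ b, ∀ hb : b ∈ Γ, a < b →
      IsCompact (Set.Icc (RGamma.plus Γ a ha) (RGamma.minus Γ b hb)) ∧
      IsOpen (Set.Icc (RGamma.plus Γ a ha) (RGamma.minus Γ b hb)) ∧
      Nonempty (↥(Set.Icc (RGamma.plus Γ a ha) (RGamma.minus Γ b hb)) ≃ₜ (ℕ → Bool)) := by
  classical
  obtain ⟨e, heΓ⟩ := hc.exists_eq_range hd.nonempty
  have He : ∀ u v : ℝ, u < v → ∃ n, e n ∈ Set.Ioo u v := by
    intro u v huv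
    obtain ⟨c, hcΓ, hc2⟩ := hd.exists_between huv
    rw [heΓ] at hcΓ
    obtain ⟨n, rfl⟩ := hcΓ
    exact ⟨n, hc2⟩
  have hre : Set.range e ⊆ Γ := heΓ ▸ Set.Subset.rfl
  have hIccIoo : ∀ (a : ℝ) (ha : a ∈ Γ) (b : ℝ) (hb : b ∈ Γ),
      Set.Icc (RGamma.plus Γ a ha) (RGamma.minus Γ b hb) =
      Set.Ioo (RGamma.minus Γ a ha) (RGamma.plus Γ b hb) := by
    intro a ha b hb
    ext z
    simp only [Set.mem_Icc, Set.mem_Ioo]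
    constructor
    · rintro ⟨h1, h2⟩
      exact ⟨lt_of_lt_of_le (RGammaAux.minus_lt_plus ha ha) h1,
        lt_of_le_of_lt h2 (RGammaAux.minus_lt_plus hb hb)⟩
    · rintro ⟨h1, h2⟩
      exact ⟨RGammaAux.plus_le_of_minus_lt h1, RGammaAux.le_minus_of_lt_plus h2⟩
  refine ⟨?_, ?_, ?_⟩
  · -- basis
    apply isTopologicalBasis_of_isOpen_of_nhds
    · rintro u ⟨a, ha, b, hb, hab, rfl⟩
      rw [hIccIoo]
      exact isOpen_Ioo
    · intro z u hzu hu
      have hnb : u ∈ nhds z := hu.mem_nhds hzu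
      have hlow : ∃ l : RGamma Γ, l < z := by
        obtain ⟨c, hcΓ, hc2⟩ := hd.exists_between (sub_one_lt (ofLex z.1).1)
        exact ⟨RGamma.minus Γ c hcΓ, (RGammaAux.lt_iff' _ _).2 (Or.inl hc2.2)⟩
      have hupp : ∃ u' : RGamma Γ, z < u' := by
        obtain ⟨c, hcΓ, hc2⟩ := hd.exists_between (lt_add_one (ofLex z.1).1)
        exact ⟨RGamma.plus Γ c hcΓ, (RGammaAux.lt_iff' _ _).2 (Or.inl hc2.1)⟩
      obtain ⟨l, u', ⟨hl, hu'⟩, hsub⟩ := (mem_nhds_iff_exists_Ioo_subset' hlow hupp).1 hnb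
      -- find left endpoint
      have hA : ∃ (A : ℝ) (hAΓ : A ∈ Γ), l < RGamma.plus Γ A hAΓ ∧ RGamma.plus Γ A hAΓ ≤ z := by
        by_cases hzt : (ofLex z.1).2 = true
        · have hcΓ : (ofLex z.1).1 ∈ Γ := by
            rcases z.2 with h | h
            · exact h
            · rw [hzt] at h; simp at h
          have hz : RGamma.plus Γ (ofLex z.1).1 hcΓ = z := by
            apply Subtype.ext
            show toLex ((ofLex z.1).1, true) = z.1
            calc toLex ((ofLex z.1).1, true) = toLex ((ofLex z.1).1, (ofLex z.1).2) := by
                  rw [hzt]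
              _ = z.1 := rfl
          exact ⟨(ofLex z.1).1, hcΓ, by rw [hz]; exact hl, hz.le⟩
        · have hlz : (ofLex l.1).1 < (ofLex z.1).1 := by
            rcases (RGammaAux.lt_iff' _ _).1 hl with h | h
            · exact h
            · exfalso
              have h2 := h.2
              rcases Bool.eq_false_or_eq_true (ofLex z.1).2 with hh | hh
              · exact hzt hh
              · rw [hh] at h2; exact absurd h2 (not_lt.2 (Bool.false_le _))
          obtain ⟨A, hAΓ, hA1, hA2⟩ := hd.exists_between hlz
          exact ⟨A, hAΓ, (RGammaAux.lt_iff' _ _).2 (Or.inl hA1),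
            (RGammaAux.le_iff' _ _).2 (Or.inl hA2)⟩
      -- find right endpoint
      have hB : ∃ (B : ℝ) (hBΓ : B ∈ Γ), z ≤ RGamma.minus Γ B hBΓ ∧ RGamma.minus Γ B hBΓ < u' := by
        by_cases hzt : (ofLex z.1).1 ∈ Γ ∧ (ofLex z.1).2 = false
        · have hz : RGamma.minus Γ (ofLex z.1).1 hzt.1 = z := by
            apply Subtype.ext
            show toLex ((ofLex z.1).1, false) = z.1
            calc toLex ((ofLex z.1).1, false) = toLex ((ofLex z.1).1, (ofLex z.1).2) := by
                  rw [hzt.2]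
              _ = z.1 := rfl
          exact ⟨(ofLex z.1).1, hzt.1, hz.ge, by rw [hz]; exact hu'⟩
        · have hzu' : (ofLex z.1).1 < (ofLex u'.1).1 := by
            rcases (RGammaAux.lt_iff' _ _).1 hu' with h | h
            · exact h
            · exfalso
              have h2 := h.2
              have hz2 : (ofLex z.1).2 = false := by
                rcases Bool.eq_false_or_eq_true (ofLex z.1).2 with hh | hh
                · rw [hh] at h2; exact absurd h2 (not_lt.2 (Bool.le_true _))
                · exact hh
              have hu2 : (ofLex u'.1).2 = true := by
                rcases Bool.eq_false_or_eq_true (ofLex u'.1).2 with hh | hh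
                · exact hh
                · rw [hz2, hh] at h2; exact absurd h2 (lt_irrefl false)
              have : (ofLex u'.1).1 ∈ Γ := by
                rcases u'.2 with hh | hh
                · exact hh
                · rw [hu2] at hh; simp at hh
              rw [← h.1] at this
              exact hzt ⟨this, hz2⟩
          obtain ⟨B, hBΓ, hB1, hB2⟩ := hd.exists_between hzu'
          exact ⟨B, hBΓ, (RGammaAux.le_iff' _ _).2 (Or.inl hB1),
            (RGammaAux.lt_iff' _ _).2 (Or.inl hB2)⟩
      obtain ⟨A, hAΓ, hA1, hA2⟩ := hA
      obtain ⟨B, hBΓ, hB1, hB2⟩ := hB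
      have hAB : A < B := by
        have := hA2.trans hB1
        rcases (RGammaAux.le_iff' _ _).1 this with h | h
        · exact h
        · exact absurd h.2 (by simp [RGamma.plus, RGamma.minus])
      refine ⟨Set.Icc (RGamma.plus Γ A hAΓ) (RGamma.minus Γ B hBΓ),
        ⟨A, hAΓ, B, hBΓ, hAB, rfl⟩, ⟨hA2, hB1⟩, ?_⟩
      intro w hw
      exact hsub ⟨lt_of_lt_of_le hA1 hw.1, lt_of_le_of_lt hw.2 hB2⟩
  · -- countable
    haveI := hc.to_subtype
    refine Set.Countable.mono ?_ (Set.countable_range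
      (fun p : ↥Γ × ↥Γ => Set.Icc (RGamma.plus Γ p.1.1 p.1.2) (RGamma.minus Γ p.2.1 p.2.2)))
    rintro S ⟨a, ha, b, hb, hab, rfl⟩
    exact ⟨(⟨a, ha⟩, ⟨b, hb⟩), rfl⟩
  · -- compact, open, Cantor
    intro a ha b hb hab
    have hΓl : ∀ (x : ℕ → Bool) (n : ℕ), (RGammaAux.ivl e a b x n).1 ∈ Γ :=
      fun x n => (RGammaAux.ivl_mem He hab ha hb hre n).1
    have hΓr : ∀ (x : ℕ → Bool) (n : ℕ), (RGammaAux.ivl e a b x n).2 ∈ Γ :=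
      fun x n => (RGammaAux.ivl_mem He hab ha hb hre n).2
    set F : (ℕ → Bool) → RGamma Γ := fun x => RGammaAux.pt Γ e a b x (hΓl x) with hF
    have hFcont : Continuous F := by
      rw [continuous_iff_continuousAt]
      intro x
      rw [ContinuousAt, Filter.tendsto_def]
      intro s hs
      have hlow : ∃ l : RGamma Γ, l < F x := by
        obtain ⟨c, hcΓ, hc2⟩ := hd.exists_between (sub_one_lt (ofLex (F x).1).1)
        exact ⟨RGamma.minus Γ c hcΓ, (RGammaAux.lt_iff' _ _).2 (Or.inl hc2.2)⟩
      have hupp : ∃ u' : RGamma Γ, F x < u' := by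
        obtain ⟨c, hcΓ, hc2⟩ := hd.exists_between (lt_add_one (ofLex (F x).1).1)
        exact ⟨RGamma.plus Γ c hcΓ, (RGammaAux.lt_iff' _ _).2 (Or.inl hc2.1)⟩
      obtain ⟨l, u', ⟨hl, hu'⟩, hsub⟩ := (mem_nhds_iff_exists_Ioo_subset' hlow hupp).1 hs
      obtain ⟨n1, hn1⟩ := RGammaAux.exists_plus_gt He hab (hΓl x) hl
      obtain ⟨n2, hn2⟩ := RGammaAux.exists_minus_lt He hab heΓ (hΓl x) (hΓr x) hu'
      set N := max n1 n2 with hN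
      have hcylopen : IsOpen {y : ℕ → Bool | ∀ i, i < N → y i = x i} := by
        have heq : {y : ℕ → Bool | ∀ i, i < N → y i = x i} =
            ⋂ i : Fin N, {y : ℕ → Bool | y i.1 = x i.1} := by
          ext w
          simp only [Set.mem_setOf_eq, Set.mem_iInter]
          exact ⟨fun h i => h i.1 i.2, fun h i hi => h ⟨i, hi⟩⟩
        rw [heq]
        refine isOpen_iInter_of_finite fun i => ?_
        have hpre : {y : ℕ → Bool | y i.1 = x i.1} =
            (fun y : ℕ → Bool => y i.1) ⁻¹' {x i.1} := rfl
        rw [hpre]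
        exact (continuous_apply (i.1 : ℕ)).isOpen_preimage _ (isOpen_discrete _)
      refine Filter.mem_of_superset (hcylopen.mem_nhds fun i _ => rfl) ?_
      intro y hy
      apply hsub
      constructor
      · have hpre : ∀ i < n1, y i = x i :=
          fun i hi => hy i (lt_of_lt_of_le hi (le_max_left _ _))
        calc l < RGamma.plus Γ (RGammaAux.ivl e a b x n1).1 (hΓl x n1) := hn1
          _ = RGamma.plus Γ (RGammaAux.ivl e a b y n1).1 (hΓl y n1) :=
            RGammaAux.plus_congr (by rw [RGammaAux.ivl_congr hpre]) _ _
          _ ≤ F y := RGammaAux.plus_le_pt He hab (hΓl y) n1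
      · have hpre : ∀ i < n2, y i = x i :=
          fun i hi => hy i (lt_of_lt_of_le hi (le_max_right _ _))
        calc F y ≤ RGamma.minus Γ (RGammaAux.ivl e a b y n2).2 (hΓr y n2) :=
            RGammaAux.pt_le_minus He hab (hΓl y) (hΓr y) n2
          _ = RGamma.minus Γ (RGammaAux.ivl e a b x n2).2 (hΓr x n2) :=
            RGammaAux.minus_congr (by rw [RGammaAux.ivl_congr hpre]) _ _
          _ < u' := hn2
    have hFinj : Function.Injective F := by
      intro x y hxy
      by_contra hne
      have hex : ∃ n, x n ≠ y n := Function.ne_iff.1 hne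
      have hpre : ∀ i < Nat.find hex, x i = y i :=
        fun i hi => not_not.1 (Nat.find_min hex hi)
      have hnn : x (Nat.find hex) ≠ y (Nat.find hex) := Nat.find_spec hex
      rcases Bool.eq_false_or_eq_true (x (Nat.find hex)) with hx | hx
      · have hyv : y (Nat.find hex) = false := by
          rcases Bool.eq_false_or_eq_true (y (Nat.find hex)) with hh | hh
          · exact absurd (hx.trans hh.symm) hnn
          · exact hh
        exact absurd hxy (ne_of_gt (RGammaAux.pt_lt He hab (hΓl y) (hΓr y) (hΓl x)
          (fun i hi => (hpre i hi).symm) hyv hx))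
      · have hyv : y (Nat.find hex) = true := by
          rcases Bool.eq_false_or_eq_true (y (Nat.find hex)) with hh | hh
          · exact hh
          · exact absurd (hx.trans hh.symm) hnn
        exact absurd hxy (ne_of_lt (RGammaAux.pt_lt He hab (hΓl x) (hΓr x) (hΓl y)
          hpre hx hyv))
    have hFsurj : ∀ w ∈ Set.Icc (RGamma.plus Γ a ha) (RGamma.minus Γ b hb), ∃ x, F x = w := by
      intro w hw
      refine ⟨RGammaAux.bits e a b w.1,
        (RGammaAux.pt_unique He hab heΓ (hΓl _) (hΓr _) w ?_).symm⟩
      intro n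
      have hp := RGammaAux.path_mem He hab (w := w.1) hw.1 hw.2 n
      constructor
      · have h1 : toLex ((RGammaAux.ivl e a b (RGammaAux.bits e a b w.1) n).1, true) ≤ w.1 := by
          rw [RGammaAux.bits_path]; exact hp.1
        exact h1
      · have h2 : w.1 ≤ toLex ((RGammaAux.ivl e a b (RGammaAux.bits e a b w.1) n).2, false) := by
          rw [RGammaAux.bits_path]; exact hp.2
        exact h2
    have hrange : Set.Icc (RGamma.plus Γ a ha) (RGamma.minus Γ b hb) = Set.range F := by
      ext w
      constructor
      · intro hw
        obtain ⟨x, hx⟩ := hFsurj w hw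
        exact ⟨x, hx⟩
      · rintro ⟨x, rfl⟩
        exact ⟨RGammaAux.plus_le_pt He hab (hΓl x) 0,
          RGammaAux.pt_le_minus He hab (hΓl x) (hΓr x) 0⟩
    refine ⟨?_, ?_, ?_⟩
    · rw [hrange]
      exact isCompact_range hFcont
    · rw [hIccIoo]
      exact isOpen_Ioo
    · set F' : (ℕ → Bool) → ↥(Set.Icc (RGamma.plus Γ a ha) (RGamma.minus Γ b hb)) :=
        fun x => ⟨F x, by rw [hrange]; exact ⟨x, rfl⟩⟩ with hF'
      have hbij : Function.Bijective F' := by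
        constructor
        · intro x y h
          exact hFinj (congrArg Subtype.val h)
        · rintro ⟨w, hw⟩
          obtain ⟨x, hx⟩ := hFsurj w hw
          exact ⟨x, Subtype.ext hx⟩
      have hcF' : Continuous F' := hFcont.subtype_mk _
      exact ⟨(Continuous.homeoOfEquivCompactToT2 (f := Equiv.ofBijective F' hbij) hcF').symm⟩
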